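/- Let F(z) = 1/(1-z-z²) be the Fibonacci generating function and C the Catalan generating function. Then the pair (F, (zC)∘(F-1)) is a Riordan pseudo-involution; in particular (zC)∘(F-1) is pseudo-involutory and F∘(-(zC)∘(F-1)) = 1/F. -/

import Mathlib

open PowerSeries

/-- Composition `f ∘ g` of formal power series (meaningful when the constant
coefficient of `g` is zero). -/
noncomputable def comp (f g : PowerSeries ℚ) : PowerSeries ℚ :=
  PowerSeries.mk fun n =>
    ∑ i ∈ Finset.range (n + 1), (PowerSeries.coeff i f) * (PowerSeries.coeff n (g ^ i))

/-- A formal power series `f` is pseudo-involutory when its compositional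
inverse is `-f(-z)`. -/
def PseudoInvolutory (f : PowerSeries ℚ) : Prop :=
  comp f (-(comp f (-X))) = X ∧ comp (-(comp f (-X))) f = X

namespace CompAux

lemma coeff_pow_eq_zero {g : PowerSeries ℚ} (hg : constantCoeff g = 0)
    {i n : ℕ} (h : n < i) : PowerSeries.coeff n (g ^ i) = 0 := by
  obtain ⟨t, rfl⟩ := PowerSeries.X_dvd_iff.mpr hg
  rw [mul_pow, PowerSeries.coeff_mul, Finset.sum_eq_zero]
  intro p hp
  rw [PowerSeries.coeff_X_pow, if_neg, zero_mul]
  have := Finset.HasAntidiagonal.antidiagonal.fst_le hp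
  omega

/-- partial sums of the composition -/
noncomputable def S (N : ℕ) (f g : PowerSeries ℚ) : PowerSeries ℚ :=
  ∑ i ∈ Finset.range N, PowerSeries.C (PowerSeries.coeff i f) * g ^ i

lemma coeff_S (N n : ℕ) (f g : PowerSeries ℚ) :
    PowerSeries.coeff n (S N f g) =
      ∑ i ∈ Finset.range N, PowerSeries.coeff i f * PowerSeries.coeff n (g ^ i) := by
  simp [S]

lemma coeff_comp_eq_coeff_S {g : PowerSeries ℚ} (hg : constantCoeff g = 0)
    (f : PowerSeries ℚ) {n N : ℕ} (hn : n < N) :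
    PowerSeries.coeff n (comp f g) = PowerSeries.coeff n (S N f g) := by
  rw [coeff_S, comp, PowerSeries.coeff_mk]
  apply Finset.sum_subset
  · intro i hi
    simp only [Finset.mem_range] at *
    omega
  · intro i _ hi
    simp only [Finset.mem_range, not_lt] at hi
    rw [coeff_pow_eq_zero hg (by omega), mul_zero]

lemma comp_add (f h g : PowerSeries ℚ) :
    comp (f + h) g = comp f g + comp h g := by
  ext n
  simp [comp, add_mul, Finset.sum_add_distrib]

lemma comp_one (g : PowerSeries ℚ) : comp 1 g = 1 := by
  ext n
  rw [comp, PowerSeries.coeff_mk, Finset.sum_eq_single 0]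
  · simp
  · intro i _ hi
    simp [PowerSeries.coeff_one, hi]
  · simp

lemma comp_X {g : PowerSeries ℚ} (hg : constantCoeff g = 0) : comp X g = g := by
  ext n
  rw [comp, PowerSeries.coeff_mk]
  rcases Nat.eq_zero_or_pos n with rfl | hn
  · simpa [PowerSeries.coeff_X] using hg.symm
  · rw [Finset.sum_eq_single 1]
    · simp
    · intro i _ hi
      simp [PowerSeries.coeff_X, hi]
    · intro h
      exact absurd (Finset.mem_range.mpr (by omega)) h

lemma comp_mul {g : PowerSeries ℚ} (hg : constantCoeff g = 0) (f h : PowerSeries ℚ) :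
    comp (f * h) g = comp f g * comp h g := by
  ext n
  rw [PowerSeries.coeff_mul]
  have hcoeff : ∀ p ∈ Finset.HasAntidiagonal.antidiagonal n,
      PowerSeries.coeff p.1 (comp f g) * PowerSeries.coeff p.2 (comp h g) =
        PowerSeries.coeff p.1 (S (n+1) f g) * PowerSeries.coeff p.2 (S (n+1) h g) := by
    intro p hp
    have := Finset.HasAntidiagonal.antidiagonal.fst_le hp
    have := Finset.HasAntidiagonal.antidiagonal.snd_le hp
    rw [coeff_comp_eq_coeff_S hg f (N := n+1) (by omega),
      coeff_comp_eq_coeff_S hg h (N := n+1) (by omega)]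
  rw [Finset.sum_congr rfl hcoeff, ← PowerSeries.coeff_mul,
    coeff_comp_eq_coeff_S hg (f*h) (Nat.lt_succ_self n)]
  -- now: coeff n (S (n+1) (f*h) g) = coeff n (S (n+1) f g * S (n+1) h g)
  have hRHS : PowerSeries.coeff n (S (n+1) f g * S (n+1) h g) =
      ∑ a ∈ Finset.range (n+1), ∑ b ∈ Finset.range (n+1),
        PowerSeries.coeff a f * PowerSeries.coeff b h *
          PowerSeries.coeff n (g ^ (a + b)) := by
    rw [S, S, Finset.sum_mul_sum]
    rw [map_sum]
    refine Finset.sum_congr rfl fun a _ => ?_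
    rw [map_sum]
    refine Finset.sum_congr rfl fun b _ => ?_
    have : PowerSeries.C ((PowerSeries.coeff a) f) * g ^ a *
        (PowerSeries.C ((PowerSeries.coeff b) h) * g ^ b) =
        PowerSeries.C (PowerSeries.coeff a f * PowerSeries.coeff b h) * g ^ (a+b) := by
      rw [map_mul, pow_add]; ring
    rw [this, PowerSeries.coeff_C_mul]
  rw [hRHS, coeff_S]
  -- LHS: triangle sum
  have hL : ∑ i ∈ Finset.range (n+1),
      PowerSeries.coeff i (f*h) * PowerSeries.coeff n (g ^ i) =
      ∑ i ∈ Finset.range (n+1), ∑ p ∈ Finset.HasAntidiagonal.antidiagonal i,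
        PowerSeries.coeff p.1 f * PowerSeries.coeff p.2 h *
          PowerSeries.coeff n (g ^ (p.1 + p.2)) := by
    refine Finset.sum_congr rfl fun i _ => ?_
    rw [PowerSeries.coeff_mul, Finset.sum_mul]
    refine Finset.sum_congr rfl fun p hp => ?_
    rw [Finset.HasAntidiagonal.mem_antidiagonal.mp hp]
  rw [hL]
  -- biUnion of antidiagonals = filtered square
  have hdisj : (↑(Finset.range (n+1)) : Set ℕ).PairwiseDisjoint
      (fun i => Finset.HasAntidiagonal.antidiagonal i) := by
    intro i _ j _ hij
    simp only [Finset.disjoint_left]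
    intro p hpi hpj
    exact hij ((Finset.HasAntidiagonal.mem_antidiagonal.mp hpi).symm.trans (Finset.HasAntidiagonal.mem_antidiagonal.mp hpj))
  rw [← Finset.sum_biUnion hdisj, ← Finset.sum_product']
  apply Finset.sum_subset
  · intro p hp
    simp only [Finset.mem_biUnion, Finset.mem_range, Finset.HasAntidiagonal.mem_antidiagonal] at hp
    obtain ⟨i, hi, rfl⟩ := hp
    simp only [Finset.mem_product, Finset.mem_range]
    omega
  · intro p _ hp
    simp only [Finset.mem_biUnion, Finset.mem_range, Finset.HasAntidiagonal.mem_antidiagonal] at hp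
    push_neg at hp
    have : n < p.1 + p.2 := by
      by_contra hle
      exact (hp (p.1 + p.2) (by omega)) rfl
    rw [coeff_pow_eq_zero hg this, mul_zero]

lemma comp_zero (g : PowerSeries ℚ) : comp 0 g = 0 := by
  ext n; simp [comp]

lemma comp_neg (f g : PowerSeries ℚ) : comp (-f) g = -comp f g := by
  have := comp_add f (-f) g
  rw [add_neg_cancel, comp_zero] at this
  linear_combination -this

lemma comp_sub (f h g : PowerSeries ℚ) : comp (f - h) g = comp f g - comp h g := by
  rw [sub_eq_add_neg, comp_add, comp_neg, sub_eq_add_neg]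

lemma comp_sq {g : PowerSeries ℚ} (hg : constantCoeff g = 0) (f : PowerSeries ℚ) :
    comp (f ^ 2) g = (comp f g) ^ 2 := by
  rw [pow_two, pow_two, comp_mul hg]

lemma comp_C (a : ℚ) (g : PowerSeries ℚ) : comp (PowerSeries.C a) g = PowerSeries.C a := by
  ext n
  rw [comp, PowerSeries.coeff_mk, Finset.sum_eq_single 0]
  · simp [PowerSeries.coeff_C, PowerSeries.coeff_one]
  · intro i _ hi
    simp [PowerSeries.coeff_C, hi]
  · simp

lemma constantCoeff_comp (f g : PowerSeries ℚ) :
    constantCoeff (comp f g) = constantCoeff f := by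
  have : PowerSeries.coeff 0 (comp f g) = PowerSeries.coeff 0 f := by
    rw [comp, PowerSeries.coeff_mk]
    simp
  simpa [PowerSeries.coeff_zero_eq_constantCoeff] using this

/-- Uniqueness: `h ↦ h - h²` is injective on series with zero constant term. -/
lemma uniq_sub {a b : PowerSeries ℚ} (ha : constantCoeff a = 0)
    (hb : constantCoeff b = 0) (h : a - a ^ 2 = b - b ^ 2) : a = b := by
  have key : (a - b) * (1 - (a + b)) = 0 := by linear_combination h
  rcases mul_eq_zero.mp key with h1 | h2
  · exact sub_eq_zero.mp h1
  · exfalso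
    have : constantCoeff (1 - (a + b)) = 1 := by simp [ha, hb]
    rw [h2] at this
    simp at this

end CompAux

/-- For the Fibonacci generating function `F = 1/(1-z-z²)` and the Catalan
series `C = 1 + zC²`, the pair `(F, (zC)∘(F-1))` is a Riordan
pseudo-involution: `(zC)∘(F-1)` is pseudo-involutory and
`F∘(-(zC)∘(F-1)) = 1/F`. -/
theorem fibonacci_pseudo_involution (Cat : PowerSeries ℚ)
    (hCat : Cat = 1 + X * Cat ^ 2) :
    PseudoInvolutory (comp (X * Cat) ((1 - X - X ^ 2 : PowerSeries ℚ)⁻¹ - 1)) ∧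
      comp ((1 - X - X ^ 2 : PowerSeries ℚ)⁻¹)
          (-(comp (X * Cat) ((1 - X - X ^ 2 : PowerSeries ℚ)⁻¹ - 1))) =
        ((1 - X - X ^ 2 : PowerSeries ℚ)⁻¹)⁻¹ := by
  open CompAux in
  have hcc : constantCoeff ((1 : PowerSeries ℚ) - X - X ^ 2) ≠ 0 := by simp
  set F : PowerSeries ℚ := (1 - X - X ^ 2 : PowerSeries ℚ)⁻¹ with hFdef
  have hFone : F * ((1 : PowerSeries ℚ) - X - X ^ 2) = 1 := by
    rw [mul_comm, hFdef]; exact PowerSeries.mul_inv_cancel _ hcc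
  have hF0 : constantCoeff F = 1 := by
    rw [hFdef, PowerSeries.constantCoeff_inv]; simp
  have hFne : constantCoeff F ≠ 0 := by rw [hF0]; exact one_ne_zero
  have hG0 : constantCoeff (F - 1) = 0 := by simp [hF0]
  have hGmul : (F - 1) * ((1 : PowerSeries ℚ) - X - X ^ 2) = X + X ^ 2 := by
    linear_combination hFone
  have hb : X * Cat - (X * Cat) ^ 2 = X := by nth_rewrite 1 [hCat]; ring
  set f : PowerSeries ℚ := comp (X * Cat) (F - 1) with hfdef
  have hf0 : constantCoeff f = 0 := by
    rw [hfdef, constantCoeff_comp]; simp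
  have hfG : f - f ^ 2 = F - 1 := by
    rw [hfdef, ← comp_sq hG0, ← comp_sub, hb, comp_X hG0]
  have hpoly1 : ∀ v : PowerSeries ℚ, constantCoeff v = 0 →
      comp ((1 : PowerSeries ℚ) - X - X ^ 2) v = 1 - v - v ^ 2 := by
    intro v hv
    rw [comp_sub, comp_sub, comp_one, comp_sq hv, comp_X hv]
  have hpoly2 : ∀ v : PowerSeries ℚ, constantCoeff v = 0 →
      comp ((X : PowerSeries ℚ) + X ^ 2) v = v + v ^ 2 := by
    intro v hv
    rw [comp_add, comp_sq hv, comp_X hv]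
  have hGv : ∀ v : PowerSeries ℚ, constantCoeff v = 0 →
      comp (F - 1) v * (1 - v - v ^ 2) = v + v ^ 2 := by
    intro v hv
    calc comp (F - 1) v * (1 - v - v ^ 2)
        = comp (F - 1) v * comp ((1 : PowerSeries ℚ) - X - X ^ 2) v := by rw [hpoly1 v hv]
      _ = comp ((F - 1) * ((1 : PowerSeries ℚ) - X - X ^ 2)) v := (comp_mul hv _ _).symm
      _ = comp ((X : PowerSeries ℚ) + X ^ 2) v := by rw [hGmul]
      _ = v + v ^ 2 := hpoly2 v hv
  have hXneg0 : constantCoeff (-X : PowerSeries ℚ) = 0 := by simp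
  set w : PowerSeries ℚ := comp (F - 1) (-X) with hwdef
  have hw' : w * ((1 : PowerSeries ℚ) + X - X ^ 2) = -X + X ^ 2 := by
    linear_combination hGv (-X) hXneg0
  set u : PowerSeries ℚ := -(comp f (-X)) with hudef
  have hu0 : constantCoeff u = 0 := by
    rw [hudef, map_neg, constantCoeff_comp, hf0, neg_zero]
  have huw : u + u ^ 2 = -w := by
    have h4 : comp f (-X) - (comp f (-X)) ^ 2 = w := by
      rw [hwdef, ← hfG, comp_sub, comp_sq hXneg0]
    rw [hudef]; linear_combination -h4
  have key1 : ((1 : PowerSeries ℚ) - u - u ^ 2) * (1 + X - X ^ 2) = 1 := by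
    linear_combination (-(1 + X - (X:PowerSeries ℚ) ^ 2)) * huw + hw'
  have hGu : comp (F - 1) u = X - X ^ 2 := by
    have h2 := hGv u hu0
    calc comp (F - 1) u
        = comp (F - 1) u * ((1 - u - u ^ 2) * (1 + X - X ^ 2)) := by rw [key1, mul_one]
      _ = (comp (F - 1) u * (1 - u - u ^ 2)) * (1 + X - X ^ 2) := by ring
      _ = (u + u ^ 2) * (1 + X - X ^ 2) := by rw [h2]
      _ = (-w) * (1 + X - X ^ 2) := by rw [huw]
      _ = -(-X + X ^ 2) := by rw [neg_mul, hw']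
      _ = X - X ^ 2 := by ring
  have goal1 : comp f u = X := by
    have h3 : comp f u - (comp f u) ^ 2 = X - X ^ 2 := by
      rw [← comp_sq hu0, ← comp_sub, hfG, hGu]
    have hcfu : constantCoeff (comp f u) = 0 := by rw [constantCoeff_comp, hf0]
    have hXsq : (X : PowerSeries ℚ) - X ^ 2 = X - X ^ 2 := rfl
    exact uniq_sub hcfu PowerSeries.constantCoeff_X (h3.trans hXsq.symm)
  have goal2 : comp u f = X := by
    have hm : comp u f + (comp u f) ^ 2 = -(comp w f) := by
      calc comp u f + (comp u f) ^ 2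
          = comp (u + u ^ 2) f := by rw [comp_add, comp_sq hf0]
        _ = comp (-w) f := by rw [huw]
        _ = -(comp w f) := comp_neg _ _
    have hwf : comp w f * F = 1 - F := by
      have h5 : comp (w * ((1 : PowerSeries ℚ) + X - X ^ 2)) f
          = comp ((-X : PowerSeries ℚ) + X ^ 2) f := by rw [hw']
      have hA : comp ((1 : PowerSeries ℚ) + X - X ^ 2) f = 1 + f - f ^ 2 := by
        rw [comp_sub, comp_add, comp_one, comp_sq hf0, comp_X hf0]
      have hB : comp ((-X : PowerSeries ℚ) + X ^ 2) f = -f + f ^ 2 := by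
        rw [comp_add, comp_neg, comp_sq hf0, comp_X hf0]
      rw [comp_mul hf0, hA, hB] at h5
      linear_combination h5 - (comp w f + 1) * hfG
    have hwf2 : comp w f = -X - X ^ 2 := by
      calc comp w f = comp w f * (F * ((1 : PowerSeries ℚ) - X - X ^ 2)) := by
            rw [hFone, mul_one]
        _ = (comp w f * F) * ((1 : PowerSeries ℚ) - X - X ^ 2) := by ring
        _ = (1 - F) * ((1 : PowerSeries ℚ) - X - X ^ 2) := by rw [hwf]
        _ = -X - X ^ 2 := by linear_combination -hFone
    have hm2 : comp u f + (comp u f) ^ 2 = X + X ^ 2 := by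
      rw [hm, hwf2]; ring
    have hcuf : constantCoeff (comp u f) = 0 := by rw [constantCoeff_comp, hu0]
    have hneg : (-(comp u f)) - (-(comp u f)) ^ 2 = (-X : PowerSeries ℚ) - (-X) ^ 2 := by
      linear_combination -hm2
    have := uniq_sub (by rw [map_neg, hcuf, neg_zero])
      (by rw [map_neg, PowerSeries.constantCoeff_X, neg_zero]) hneg
    exact neg_inj.mp this
  have hnf0 : constantCoeff (-f) = 0 := by rw [map_neg, hf0, neg_zero]
  have goal3 : comp F (-f) = F⁻¹ := by
    rw [PowerSeries.eq_inv_iff_mul_eq_one hFne]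
    have h6 : comp (F * ((1 : PowerSeries ℚ) - X - X ^ 2)) (-f) = 1 := by
      rw [hFone, comp_one]
    rw [comp_mul hnf0] at h6
    have h7 : comp ((1 : PowerSeries ℚ) - X - X ^ 2) (-f) = F := by
      rw [hpoly1 (-f) hnf0]; linear_combination hfG
    rw [h7] at h6
    exact h6
  exact ⟨⟨goal1, goal2⟩, goal3⟩
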